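/- arXiv:1003.0826 — 3 statements merged into one kernel-verified Lean document; each statement's English description precedes it below -/
import Mathlib

section
/- Let U ⊆ ℝⁿ be a convex open set and let Z ⊆ U be a set such that every closed line segment contained in U meets Z in a finite set. Let f : U → ℝ be a continuous function that is differentiable at every point of U \ Z. Then f is Lipschitz on U (for some constant) if and only if there is a constant M ≥ 0 such that |∂f/∂xᵢ(x)| ≤ M for every x ∈ U \ Z and every i = 1,…,n. Quantitatively: if all partial derivatives are bounded by M on U \ Z then f is Lipschitz with constant √n·M, and if f is Lipschitz with constant L then every partial derivative at every point of U \ Z is bounded in absolute value by L. -/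
open Set

/-- 1D MVT inequality with a finite exceptional set. -/
lemma mvt_finite_exception (g : ℝ → ℝ) (C : ℝ) :
    ∀ (k : ℕ) (T : Set ℝ) (a b : ℝ), T.Finite → a ≤ b →
      (T ∩ Ioo a b).ncard ≤ k →
      ContinuousOn g (Icc a b) →
      (∀ t ∈ Ioo a b, t ∉ T → HasDerivAt g (deriv g t) t ∧ |deriv g t| ≤ C) →
      |g b - g a| ≤ C * (b - a) := by
  intro k
  induction k with
  | zero =>
    intro T a b hT hab hcard hcont hder
    have hempty : T ∩ Ioo a b = ∅ := by
      rw [← Set.ncard_eq_zero ((hT.inter_of_left _))] at *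
      omega
    rcases eq_or_lt_of_le hab with rfl | hab'
    · simp
    · have hder' : ∀ t ∈ Ioo a b, HasDerivAt g (deriv g t) t := by
        intro t ht
        have htT : t ∉ T := fun h => (Set.eq_empty_iff_forall_notMem.1 hempty t) ⟨h, ht⟩
        exact (hder t ht htT).1
      obtain ⟨c, hc, hceq⟩ := exists_hasDerivAt_eq_slope g (deriv g) hab' hcont hder'
      have hcT : c ∉ T := fun h => (Set.eq_empty_iff_forall_notMem.1 hempty c) ⟨h, hc⟩
      have hCc := (hder c hc hcT).2
      rw [hceq] at hCc
      rw [abs_div] at hCc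
      have hba : 0 < b - a := by linarith
      rw [abs_of_pos hba, div_le_iff₀ hba] at hCc
      exact hCc
  | succ m ih =>
    intro T a b hT hab hcard hcont hder
    by_cases hne : (T ∩ Ioo a b).Nonempty
    · obtain ⟨t, htT, hta, htb⟩ := hne
      have hfin : (T ∩ Ioo a b).Finite := hT.inter_of_left _
      have h1 : (T ∩ Ioo a t).ncard ≤ m := by
        have hsub : T ∩ Ioo a t ⊆ (T ∩ Ioo a b) \ {t} := by
          rintro s ⟨hsT, hsa, hst⟩
          exact ⟨⟨hsT, hsa, hst.trans htb⟩, fun h => by simp only [Set.mem_singleton_iff] at h; subst h; exact lt_irrefl _ hst⟩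
        have := Set.ncard_le_ncard hsub hfin.diff
        have h2 := Set.ncard_diff_singleton_lt_of_mem (s := T ∩ Ioo a b) ⟨htT, hta, htb⟩ hfin
        omega
      have h2 : (T ∩ Ioo t b).ncard ≤ m := by
        have hsub : T ∩ Ioo t b ⊆ (T ∩ Ioo a b) \ {t} := by
          rintro s ⟨hsT, hst, hsb⟩
          exact ⟨⟨hsT, hta.trans hst, hsb⟩, fun h => by simp only [Set.mem_singleton_iff] at h; subst h; exact lt_irrefl _ hst⟩
        have := Set.ncard_le_ncard hsub hfin.diff
        have h2 := Set.ncard_diff_singleton_lt_of_mem (s := T ∩ Ioo a b) ⟨htT, hta, htb⟩ hfin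
        omega
      have ha := ih T a t hT hta.le h1 (hcont.mono (Icc_subset_Icc le_rfl htb.le))
        (fun s hs hsT => hder s ⟨hs.1, hs.2.trans htb⟩ hsT)
      have hb := ih T t b hT htb.le h2 (hcont.mono (Icc_subset_Icc hta.le le_rfl))
        (fun s hs hsT => hder s ⟨hta.trans hs.1, hs.2⟩ hsT)
      calc |g b - g a| ≤ |g b - g t| + |g t - g a| := abs_sub_le _ _ _
        _ ≤ C * (b - t) + C * (t - a) := add_le_add hb ha
        _ = C * (b - a) := by ring
    · rw [Set.not_nonempty_iff_eq_empty] at hne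
      exact ih T a b hT hab (by rw [hne]; simp) hcont hder

lemma apply_le_sqrt_mul {n : ℕ} (φ : EuclideanSpace ℝ (Fin n) →L[ℝ] ℝ) {M : ℝ} (hM : 0 ≤ M)
    (h : ∀ i, |φ (EuclideanSpace.single i 1)| ≤ M) (v : EuclideanSpace ℝ (Fin n)) :
    |φ v| ≤ Real.sqrt n * M * ‖v‖ := by
  have hv : ∑ i, v i • EuclideanSpace.single i (1 : ℝ) = v := by
    have := (EuclideanSpace.basisFun (Fin n) ℝ).sum_repr v
    simpa [EuclideanSpace.basisFun_apply, EuclideanSpace.basisFun_repr] using this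
  have h1 : |φ v| ≤ ∑ i, |v i| * M := by
    conv_lhs => rw [← hv]
    rw [map_sum]
    refine (Finset.abs_sum_le_sum_abs _ _).trans (Finset.sum_le_sum fun i _ => ?_)
    rw [map_smul, smul_eq_mul, abs_mul]
    exact mul_le_mul_of_nonneg_left (h i) (abs_nonneg _)
  have hnorm : ‖v‖ ^ 2 = ∑ i, |v i| ^ 2 := by
    rw [EuclideanSpace.norm_eq, Real.sq_sqrt (by positivity)]
    simp [Real.norm_eq_abs]
  have hcs : (∑ i, |v i|) ^ 2 ≤ (n : ℝ) * ‖v‖ ^ 2 := by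
    have := sq_sum_le_card_mul_sum_sq (s := Finset.univ) (f := fun i : Fin n => |v i|)
    simpa [hnorm] using this
  have hle : ∑ i, |v i| ≤ Real.sqrt n * ‖v‖ := by
    have h2 : Real.sqrt n * ‖v‖ = Real.sqrt ((n : ℝ) * ‖v‖ ^ 2) := by
      rw [Real.sqrt_mul (Nat.cast_nonneg _), Real.sqrt_sq (norm_nonneg _)]
    rw [h2]
    exact Real.le_sqrt_of_sq_le hcs
  calc |φ v| ≤ ∑ i, |v i| * M := h1
    _ = (∑ i, |v i|) * M := by rw [Finset.sum_mul]
    _ ≤ Real.sqrt n * ‖v‖ * M := mul_le_mul_of_nonneg_right hle hM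
    _ = Real.sqrt n * M * ‖v‖ := by ring


/-- **Lipschitz criterion off a segment-finite exceptional set** (Lemma 2.1 of the paper).
Let `U ⊆ ℝⁿ` be convex open, `Z ⊆ U` meet every closed segment contained in `U` in a finite
set, and `f : U → ℝ` be continuous on `U` and differentiable at every point of `U \ Z`.
Then `f` is Lipschitz on `U` iff its partial derivatives are bounded on `U \ Z`;
quantitatively, bound `M` on the partials gives Lipschitz constant `√n · M`, and Lipschitz
constant `L` bounds every partial derivative by `L`. -/
theorem lipschitz_iff_bounded_partials
    {n : ℕ} (U Z : Set (EuclideanSpace ℝ (Fin n)))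
    (hUopen : IsOpen U) (hUconv : Convex ℝ U) (hZU : Z ⊆ U)
    (hseg : ∀ x y : EuclideanSpace ℝ (Fin n), segment ℝ x y ⊆ U →
      (Z ∩ segment ℝ x y).Finite)
    (f : EuclideanSpace ℝ (Fin n) → ℝ)
    (hcont : ContinuousOn f U)
    (hdiff : ∀ x ∈ U \ Z, DifferentiableAt ℝ f x) :
    ((∃ L : ℝ, 0 ≤ L ∧ ∀ x ∈ U, ∀ y ∈ U, |f x - f y| ≤ L * ‖x - y‖) ↔
      (∃ M : ℝ, 0 ≤ M ∧ ∀ x ∈ U \ Z, ∀ i : Fin n,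
        |fderiv ℝ f x (EuclideanSpace.single i 1)| ≤ M)) ∧
    (∀ M : ℝ, 0 ≤ M →
      (∀ x ∈ U \ Z, ∀ i : Fin n, |fderiv ℝ f x (EuclideanSpace.single i 1)| ≤ M) →
      ∀ x ∈ U, ∀ y ∈ U, |f x - f y| ≤ Real.sqrt n * M * ‖x - y‖) ∧
    (∀ L : ℝ, 0 ≤ L →
      (∀ x ∈ U, ∀ y ∈ U, |f x - f y| ≤ L * ‖x - y‖) →
      ∀ x ∈ U \ Z, ∀ i : Fin n, |fderiv ℝ f x (EuclideanSpace.single i 1)| ≤ L) := by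
  -- Part 3: Lipschitz implies bounded partials.
  have part3 : ∀ L : ℝ, 0 ≤ L →
      (∀ x ∈ U, ∀ y ∈ U, |f x - f y| ≤ L * ‖x - y‖) →
      ∀ x ∈ U \ Z, ∀ i : Fin n, |fderiv ℝ f x (EuclideanSpace.single i 1)| ≤ L := by
    intro L hL hLip x hx i
    have hd := (hdiff x hx).hasFDerivAt
    have hnhds : U ∈ nhds x := hUopen.mem_nhds hx.1
    have hev : ∀ᶠ y in nhds x, ‖f y - f x‖ ≤ L * ‖y - x‖ := by
      filter_upwards [hnhds] with y hy
      simpa [Real.norm_eq_abs] using hLip y hy x hx.1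
    have hop : ‖fderiv ℝ f x‖ ≤ L := hd.le_of_lip' hL hev
    calc |fderiv ℝ f x (EuclideanSpace.single i 1)|
        ≤ ‖fderiv ℝ f x‖ * ‖EuclideanSpace.single i (1 : ℝ)‖ := by
          simpa [Real.norm_eq_abs] using (fderiv ℝ f x).le_opNorm (EuclideanSpace.single i 1)
      _ ≤ L := by
          rw [EuclideanSpace.norm_single]
          simpa using hop
  -- Part 2: bounded partials give a Lipschitz estimate.
  have part2 : ∀ M : ℝ, 0 ≤ M →
      (∀ x ∈ U \ Z, ∀ i : Fin n, |fderiv ℝ f x (EuclideanSpace.single i 1)| ≤ M) →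
      ∀ x ∈ U, ∀ y ∈ U, |f x - f y| ≤ Real.sqrt n * M * ‖x - y‖ := by
    intro M hM hb x hx y hy
    rcases eq_or_ne x y with rfl | hxy
    · simp
    · set γ : ℝ → EuclideanSpace ℝ (Fin n) := fun t => x + t • (y - x) with hγ
      have hsegU : segment ℝ x y ⊆ U := hUconv.segment_subset hx hy
      have hmem : ∀ t ∈ Icc (0:ℝ) 1, γ t ∈ segment ℝ x y := by
        intro t ht
        rw [segment_eq_image']
        exact ⟨t, ht, rfl⟩
      have hγinj : Function.Injective γ := by
        intro s t hst
        have h1 : s • (y - x) = t • (y - x) := by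
          have : x + s • (y - x) = x + t • (y - x) := hst
          exact add_left_cancel this
        have h2 : (s - t) • (y - x) = 0 := by rw [sub_smul, h1, sub_self]
        rcases smul_eq_zero.1 h2 with h | h
        · exact sub_eq_zero.1 h
        · exact absurd (sub_eq_zero.1 h).symm hxy
      have hTfin : (γ ⁻¹' Z ∩ Icc 0 1).Finite := by
        have hf1 : (γ ⁻¹' (Z ∩ segment ℝ x y)).Finite :=
          (hseg x y hsegU).preimage hγinj.injOn
        refine hf1.subset ?_
        rintro t ⟨htZ, ht01⟩
        exact ⟨htZ, hmem t ht01⟩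
      set T : Set ℝ := γ ⁻¹' Z ∩ Icc 0 1 with hT
      set g : ℝ → ℝ := fun t => f (γ t) with hg
      have hgc : ContinuousOn g (Icc 0 1) := by
        refine hcont.comp ?_ (fun t ht => hsegU (hmem t ht))
        exact (continuous_const.add (continuous_id.smul continuous_const)).continuousOn
      set C : ℝ := Real.sqrt n * M * ‖y - x‖ with hC
      have hC0 : 0 ≤ C := by positivity
      have hder : ∀ t ∈ Ioo (0:ℝ) 1, t ∉ T →
          HasDerivAt g (deriv g t) t ∧ |deriv g t| ≤ C := by
        intro t ht htT
        have ht01 : t ∈ Icc (0:ℝ) 1 := Ioo_subset_Icc_self ht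
        have hγtU : γ t ∈ U := hsegU (hmem t ht01)
        have hγtZ : γ t ∉ Z := fun h => htT ⟨h, ht01⟩
        have hγd : HasDerivAt γ (y - x) t := by
          simpa [hγ] using ((hasDerivAt_id t).smul_const (y - x)).const_add x
        have hfd := (hdiff (γ t) ⟨hγtU, hγtZ⟩).hasFDerivAt
        have hgd : HasDerivAt g (fderiv ℝ f (γ t) (y - x)) t := hfd.comp_hasDerivAt t hγd
        refine ⟨hgd.deriv ▸ hgd, ?_⟩
        rw [hgd.deriv]
        exact apply_le_sqrt_mul (fderiv ℝ f (γ t)) hM (hb (γ t) ⟨hγtU, hγtZ⟩) (y - x)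
      have hmvt := mvt_finite_exception g C T.ncard T 0 1 hTfin (by norm_num)
        (Set.ncard_le_ncard Set.inter_subset_left hTfin) hgc hder
      have hg0 : g 0 = f x := by simp [hg, hγ]
      have hg1 : g 1 = f y := by simp [hg, hγ]
      rw [hg0, hg1] at hmvt
      calc |f x - f y| = |g 1 - g 0| := by rw [hg0, hg1, abs_sub_comm]
        _ ≤ C * (1 - 0) := mvt_finite_exception g C T.ncard T 0 1 hTfin (by norm_num)
            (Set.ncard_le_ncard Set.inter_subset_left hTfin) hgc hder
        _ = Real.sqrt n * M * ‖x - y‖ := by rw [hC, norm_sub_rev]; ring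
  refine ⟨⟨?_, ?_⟩, part2, part3⟩
  · rintro ⟨L, hL, hLip⟩
    exact ⟨L, hL, part3 L hL hLip⟩
  · rintro ⟨M, hM, hb⟩
    exact ⟨Real.sqrt n * M, by positivity, part2 M hM hb⟩
end

section
/- Let f : ℝⁿ → ℝⁿ be a homeomorphism that is Lipschitz with constant L. Let Z ⊆ ℝⁿ be a set such that the image f(Z) meets every closed line segment in ℝⁿ in a finite set. Suppose f is differentiable at every point of ℝⁿ \ Z and there is a constant c₁ > 0 with |det(Df(x))| ≥ c₁ for all x ∈ ℝⁿ \ Z. Then the inverse homeomorphism f⁻¹ : ℝⁿ → ℝⁿ is Lipschitz (for some constant). -/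
open Set Filter Topology

/-- Mean value inequality for a function on `[a, b]` that is continuous on `[a, b]` and
differentiable off a finite exceptional set, with derivative bounded in norm by `C`. -/
lemma aux_mvt_finite {E : Type*} [NormedAddCommGroup E] [NormedSpace ℝ E]
    {s : Set ℝ} (hs : s.Finite) :
    ∀ (g : ℝ → E) (a b C : ℝ), 0 ≤ C → a ≤ b → ContinuousOn g (Icc a b) →
      (∀ x ∈ Ioo a b, x ∉ s → ∃ g', HasDerivAt g g' x ∧ ‖g'‖ ≤ C) →
      ‖g b - g a‖ ≤ C * (b - a) := by
  refine Set.Finite.induction_on s hs ?_ ?_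
  · intro g a b C hC hab hg hd
    rcases eq_or_lt_of_le hab with rfl | hab
    · simp
    · -- choose a derivative function
      classical
      set g' : ℝ → E := fun x =>
        if h : ∃ d, HasDerivAt g d x ∧ ‖d‖ ≤ C then h.choose else 0 with hg'
      have key : ∀ a' ∈ Ioc a b, ‖g b - g a'‖ ≤ C * (b - a') := by
        intro a' ha'
        have := norm_image_sub_le_of_norm_deriv_right_le_segment
          (f := g) (a := a') (b := b) (f' := g') (C := C)
          (hg.mono (Icc_subset_Icc ha'.1.le le_rfl))
          (fun x hx => ?_) (fun x hx => ?_) b (right_mem_Icc.2 ha'.2)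
        · exact this
        · have hx' : x ∈ Ioo a b := ⟨lt_of_lt_of_le ha'.1 hx.1, hx.2⟩
          have h : ∃ d, HasDerivAt g d x ∧ ‖d‖ ≤ C := hd x hx' (notMem_empty x)
          rw [hg']; simp only [dif_pos h]
          exact h.choose_spec.1.hasDerivWithinAt
        · have hx' : x ∈ Ioo a b := ⟨lt_of_lt_of_le ha'.1 hx.1, hx.2⟩
          have h : ∃ d, HasDerivAt g d x ∧ ‖d‖ ≤ C := hd x hx' (notMem_empty x)
          rw [hg']; simp only [dif_pos h]
          exact h.choose_spec.2
      -- take the limit a' → a⁺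
      have hne : (𝓝[Ioc a b] a).NeBot := by
        rw [← mem_closure_iff_nhdsWithin_neBot, closure_Ioc hab.ne]
        exact left_mem_Icc.2 hab.le
      have h1 : Tendsto (fun a' => ‖g b - g a'‖) (𝓝[Ioc a b] a) (𝓝 ‖g b - g a‖) := by
        refine Tendsto.norm (tendsto_const_nhds.sub ?_)
        exact (hg.continuousWithinAt (left_mem_Icc.2 hab.le)).mono_left
          (nhdsWithin_mono _ Ioc_subset_Icc_self)
      have h2 : Tendsto (fun a' => C * (b - a')) (𝓝[Ioc a b] a) (𝓝 (C * (b - a))) := by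
        exact (tendsto_const_nhds.mul (tendsto_const_nhds.sub
          (tendsto_id.mono_left nhdsWithin_le_nhds)))
      exact le_of_tendsto_of_tendsto h1 h2
        ((eventually_mem_nhdsWithin).mono fun a' ha' => key a' ha')
  · intro c t hct ht IH g a b C hC hab hg hd
    by_cases hc : c ∈ Ioo a b
    · have h1 : ‖g c - g a‖ ≤ C * (c - a) :=
        IH g a c C hC hc.1.le (hg.mono (Icc_subset_Icc le_rfl hc.2.le))
          (fun x hx hxs => hd x ⟨hx.1, hx.2.trans hc.2⟩
            (by simp only [mem_insert_iff, not_or]; exact ⟨ne_of_lt hx.2, hxs⟩))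
      have h2 : ‖g b - g c‖ ≤ C * (b - c) :=
        IH g c b C hC hc.2.le (hg.mono (Icc_subset_Icc hc.1.le le_rfl))
          (fun x hx hxs => hd x ⟨hc.1.trans hx.1, hx.2⟩
            (by simp only [mem_insert_iff, not_or]; exact ⟨(ne_of_gt hx.1), hxs⟩))
      calc ‖g b - g a‖ = ‖g b - g c + (g c - g a)‖ := by rw [sub_add_sub_cancel]
        _ ≤ ‖g b - g c‖ + ‖g c - g a‖ := norm_add_le _ _
        _ ≤ C * (b - c) + C * (c - a) := add_le_add h2 h1
        _ = C * (b - a) := by ring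
    · exact IH g a b C hC hab hg
        (fun x hx hxs => hd x hx
          (by simp only [mem_insert_iff, not_or]
              exact ⟨fun h => hc (h ▸ hx), hxs⟩))

/-- A continuous map that is differentiable with derivative bounded by `C` off a set `S`
meeting every segment in a finite set is Lipschitz with constant `C`. -/
lemma aux_lip_of_fderiv_bound {E F : Type*} [NormedAddCommGroup E] [NormedSpace ℝ E]
    [NormedAddCommGroup F] [NormedSpace ℝ F]
    (g : E → F) (hg : Continuous g) (S : Set E)
    (hS : ∀ x y : E, (S ∩ segment ℝ x y).Finite) (C : ℝ) (hC : 0 ≤ C)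
    (hd : ∀ p ∉ S, ∃ g' : E →L[ℝ] F, HasFDerivAt g g' p ∧ ‖g'‖ ≤ C) :
    ∀ x y : E, ‖g y - g x‖ ≤ C * ‖y - x‖ := by
  intro x y
  by_cases hxy : y = x
  · simp [hxy]
  have hyx : y - x ≠ 0 := sub_ne_zero.2 hxy
  set ι : ℝ → E := fun t => x + t • (y - x) with hι
  have hinj : Function.Injective ι := by
    intro t₁ t₂ h
    have : t₁ • (y - x) = t₂ • (y - x) := by
      simpa [hι] using h
    exact smul_left_injective ℝ hyx this
  set s : Set ℝ := {t | t ∈ Icc (0:ℝ) 1 ∧ ι t ∈ S} with hsdef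
  have hsub : s ⊆ ι ⁻¹' (S ∩ segment ℝ x y) := by
    intro t ht
    refine ⟨ht.2, ?_⟩
    rw [segment_eq_image' ℝ x y]
    exact ⟨t, ht.1, rfl⟩
  have hfin : s.Finite := ((hS x y).preimage hinj.injOn).subset hsub
  have := aux_mvt_finite hfin (fun t => g (ι t)) 0 1 (C * ‖y - x‖)
    (by positivity) zero_le_one
    ((hg.comp (by continuity)).continuousOn)
    (fun t ht hts => ?_)
  · simpa [hι] using this
  · have hmem : ι t ∉ S := by
      intro h
      exact hts ⟨⟨ht.1.le, ht.2.le⟩, h⟩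
    obtain ⟨g', hg', hb⟩ := hd (ι t) hmem
    have hιd : HasDerivAt ι (y - x) t := by
      simpa only [one_smul, id] using ((hasDerivAt_id t).smul_const (y - x)).const_add x
    refine ⟨g' (y - x), hg'.comp_hasDerivAt t hιd, ?_⟩
    calc ‖g' (y - x)‖ ≤ ‖g'‖ * ‖y - x‖ := g'.le_opNorm _
      _ ≤ C * ‖y - x‖ := by
          exact mul_le_mul_of_nonneg_right hb (norm_nonneg _)

/-- A continuous linear endomorphism of a finite-dimensional space with nonzero determinant
comes from a continuous linear equivalence. -/
lemma aux_isUnit_of_det_ne_zero {E : Type*} [NormedAddCommGroup E] [NormedSpace ℝ E]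
    [FiniteDimensional ℝ E] (B : E →L[ℝ] E)
    (h : LinearMap.det (B : E →ₗ[ℝ] E) ≠ 0) :
    ∃ e : E ≃L[ℝ] E, (e : E →L[ℝ] E) = B := by
  let e₀ : E ≃ₗ[ℝ] E := LinearMap.equivOfDetNeZero (B : E →ₗ[ℝ] E) h
  have he₀ : (e₀ : E →ₗ[ℝ] E) = (B : E →ₗ[ℝ] E) := LinearEquiv.coe_ofIsUnitDet _
  refine ⟨e₀.toContinuousLinearEquiv, ?_⟩
  ext x
  exact DFunLike.congr_fun he₀ x

/-- Uniform bound, by compactness, on the norm of the inverse of a continuous linear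
equivalence with bounded norm and determinant bounded below. -/
lemma aux_exists_inverse_bound {E : Type*} [NormedAddCommGroup E] [NormedSpace ℝ E]
    [FiniteDimensional ℝ E] (L c₁ : ℝ) (hc : 0 < c₁) :
    ∃ C : ℝ, 0 ≤ C ∧ ∀ e : E ≃L[ℝ] E, ‖(e : E →L[ℝ] E)‖ ≤ L →
      c₁ ≤ |LinearMap.det ((e : E →L[ℝ] E) : E →ₗ[ℝ] E)| →
      ‖(e.symm : E →L[ℝ] E)‖ ≤ C := by
  set K : Set (E →L[ℝ] E) :=
    {B | ‖B‖ ≤ L ∧ c₁ ≤ |LinearMap.det (B : E →ₗ[ℝ] E)|} with hK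
  have hKclosed : IsClosed K := by
    refine IsClosed.inter (isClosed_le continuous_norm continuous_const) ?_
    exact isClosed_le continuous_const (ContinuousLinearMap.continuous_det.abs)
  have hKcompact : IsCompact K := by
    refine (isCompact_closedBall (0 : E →L[ℝ] E) L).of_isClosed_subset hKclosed ?_
    intro B hB
    simpa [Metric.mem_closedBall, dist_zero_right] using hB.1
  have hcont : ContinuousOn (fun B : E →L[ℝ] E => ‖Ring.inverse B‖) K := by
    intro B hB
    have hdet : LinearMap.det (B : E →ₗ[ℝ] E) ≠ 0 := by
      intro h
      have h2 := hB.2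
      rw [h] at h2
      simpa using lt_of_lt_of_le hc h2
    obtain ⟨e, he⟩ := aux_isUnit_of_det_ne_zero B hdet
    have hcb := (NormedRing.inverse_continuousAt
      ((ContinuousLinearEquiv.unitsEquiv ℝ E).symm e)).norm
    have hval : (((ContinuousLinearEquiv.unitsEquiv ℝ E).symm e : (E →L[ℝ] E)ˣ) : E →L[ℝ] E)
        = B := he
    rw [hval] at hcb
    exact hcb.continuousWithinAt
  obtain ⟨C, hCmem⟩ := (hKcompact.image_of_continuousOn hcont).bddAbove
  refine ⟨max C 0, le_max_right _ _, fun e hL hdet => ?_⟩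
  have hmem : (e : E →L[ℝ] E) ∈ K := ⟨hL, hdet⟩
  have hinv : Ring.inverse ((e : E →L[ℝ] E)) = (e.symm : E →L[ℝ] E) := by
    rw [ContinuousLinearMap.ringInverse_equiv, ContinuousLinearMap.inverse_equiv]
  have := hCmem ⟨_, hmem, rfl⟩
  simp only [hinv] at this
  exact this.trans (le_max_left _ _)

/-- **The inverse of a Lipschitz homeomorphism with Jacobian bounded below is Lipschitz**
(Corollary 2.3 of the paper). Let `f : ℝⁿ → ℝⁿ` be a homeomorphism, Lipschitz with
constant `L`, differentiable off a set `Z` whose image `f(Z)` meets every closed segment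
in a finite set, with `|det (Df x)| ≥ c₁ > 0` off `Z`. Then `f⁻¹` is Lipschitz. -/
theorem inverse_lipschitz_of_lipschitz_of_det_bounded_below
    {n : ℕ}
    (f : EuclideanSpace ℝ (Fin n) ≃ₜ EuclideanSpace ℝ (Fin n))
    (L : ℝ) (hlip : ∀ x y : EuclideanSpace ℝ (Fin n), ‖f x - f y‖ ≤ L * ‖x - y‖)
    (Z : Set (EuclideanSpace ℝ (Fin n)))
    (hseg : ∀ x y : EuclideanSpace ℝ (Fin n), ((f '' Z) ∩ segment ℝ x y).Finite)
    (hdiff : ∀ x ∉ Z, DifferentiableAt ℝ f x)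
    (c₁ : ℝ) (hc₁ : 0 < c₁)
    (hdet : ∀ x ∉ Z, c₁ ≤ |LinearMap.det (fderiv ℝ f x).toLinearMap|) :
    ∃ L' : ℝ, ∀ x y : EuclideanSpace ℝ (Fin n),
      ‖f.symm x - f.symm y‖ ≤ L' * ‖x - y‖ := by
  obtain ⟨C, hC0, hC⟩ :=
    aux_exists_inverse_bound (E := EuclideanSpace ℝ (Fin n)) (max L 0) c₁ hc₁
  -- `f` is Lipschitz with constant `max L 0 ≥ 0`
  have hlipf : LipschitzWith (Real.toNNReal (max L 0)) f := by
    refine LipschitzWith.of_dist_le_mul fun x y => ?_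
    rw [Real.coe_toNNReal _ (le_max_right L 0), dist_eq_norm, dist_eq_norm]
    calc ‖f x - f y‖ ≤ L * ‖x - y‖ := hlip x y
      _ ≤ max L 0 * ‖x - y‖ :=
          mul_le_mul_of_nonneg_right (le_max_left L 0) (norm_nonneg _)
  refine ⟨C, fun x y => ?_⟩
  have key := aux_lip_of_fderiv_bound (⇑f.symm) f.symm.continuous (f '' Z) hseg C hC0 ?_
  · exact key y x
  intro p hp
  have haZ : f.symm p ∉ Z := fun h => hp ⟨f.symm p, h, f.apply_symm_apply p⟩
  have hda := (hdiff _ haZ).hasFDerivAt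
  have hdet' := hdet _ haZ
  have hne : LinearMap.det ((fderiv ℝ f (f.symm p)).toLinearMap) ≠ 0 := by
    intro h
    rw [h] at hdet'
    simpa using lt_of_lt_of_le hc₁ hdet'
  obtain ⟨e, he⟩ := aux_isUnit_of_det_ne_zero _ hne
  have hfa : HasFDerivAt f
      (e : EuclideanSpace ℝ (Fin n) →L[ℝ] EuclideanSpace ℝ (Fin n)) (f.symm p) := he ▸ hda
  have hgd : HasFDerivAt (⇑f.symm)
      (e.symm : EuclideanSpace ℝ (Fin n) →L[ℝ] EuclideanSpace ℝ (Fin n)) p :=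
    hfa.of_local_left_inverse (f.symm.continuous.continuousAt)
      (Eventually.of_forall f.apply_symm_apply)
  refine ⟨_, hgd, hC e ?_ ?_⟩
  · have := hfa.le_of_lipschitz hlipf
    rwa [Real.coe_toNNReal _ (le_max_right L 0)] at this
  · rw [he]
    exact hdet'
end

section
/- Let σ = (σ₁,…,σₙ) be an n-tuple of polynomials in ℝ[x₁,…,xₙ], defining a polynomial map ℝⁿ → ℝⁿ. Let γ = (γ₁,…,γₙ) be an n-tuple of formal power series in ℝ⟦t⟧, each of order ≥ 1, and suppose the determinant of the Jacobian matrix J(t) = ((∂σᵢ/∂xⱼ)(γ))_{i,j} is nonzero of order e ∈ ℕ. Let k ≥ 2e be an integer and let J_k = (ℝ[t]/(t^{k+1}))ⁿ be the space of k-jets. Then the set T ⊆ J_k of reductions modulo t^{k+1} of those n-tuples δ ∈ ℝ⟦t⟧ⁿ satisfying δ ≡ γ mod t^{k−e+1} and σ(δ) ≡ σ(γ) mod t^{k+1} is an affine subspace of J_k of dimension e; that is, T = γ̄ + W where γ̄ is the class of γ and W is an ℝ-linear subspace of J_k with dim_ℝ W = e. -/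
open PowerSeries MvPolynomial

noncomputable section JetFiberAux
set_option maxHeartbeats 1000000
set_option synthInstance.maxHeartbeats 1000000
set_option linter.unusedVariables false
local notation "RR" => PowerSeries ℝ

lemma PS.exists_unit_factor (f : PowerSeries ℝ) (d : ℕ) (hf : f.order = (d : ℕ∞)) :
    ∃ g : PowerSeries ℝ, IsUnit g ∧ f = PowerSeries.X ^ d * g := by
  have hdvd : (X : PowerSeries ℝ) ^ d ∣ f := by
    rw [PowerSeries.X_pow_dvd_iff]
    intro m hm
    exact PowerSeries.coeff_of_lt_order m (by rw [hf]; exact_mod_cast hm)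
  obtain ⟨g, rfl⟩ := hdvd
  have hX : ((X : PowerSeries ℝ) ^ d).order = (d : ℕ∞) := PowerSeries.order_X_pow d
  have hmul := PowerSeries.order_mul ((X : PowerSeries ℝ) ^ d) g
  rw [hf, hX] at hmul
  have hg0 : g.order = 0 := by
    have := hmul.symm
    have h2 : (d : ℕ∞) + g.order = (d : ℕ∞) + 0 := by rw [add_zero]; exact this.symm ▸ rfl
    exact WithTop.add_left_cancel (WithTop.natCast_ne_top d) h2
  refine ⟨g, ?_, rfl⟩
  rw [PowerSeries.isUnit_iff_constantCoeff, isUnit_iff_ne_zero]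
  have := (PowerSeries.order_eq_nat (n := 0)).mp hg0
  simpa [PowerSeries.coeff_zero_eq_constantCoeff] using this.1

def PS.coeffMap (d : ℕ) : PowerSeries ℝ →ₗ[ℝ] (Fin d → ℝ) :=
  LinearMap.pi fun i => PowerSeries.coeff (R := ℝ) (i : ℕ)

lemma PS.coeffMap_surj (d : ℕ) : Function.Surjective (PS.coeffMap d) := by
  intro v
  refine ⟨PowerSeries.mk (fun j => if h : j < d then v ⟨j, h⟩ else 0), ?_⟩
  funext i
  simp [PS.coeffMap, PowerSeries.coeff_mk, i.isLt]

lemma PS.ker_coeffMap (d : ℕ) :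
    LinearMap.ker (PS.coeffMap d) =
      (Ideal.span {(X : PowerSeries ℝ) ^ d}).restrictScalars ℝ := by
  ext f
  simp only [LinearMap.mem_ker, Submodule.restrictScalars_mem, Ideal.mem_span_singleton,
    PowerSeries.X_pow_dvd_iff, PS.coeffMap, funext_iff, LinearMap.pi_apply]
  constructor
  · intro H m hm; exact H ⟨m, hm⟩
  · intro H i; exact H i i.isLt

def PS.e1 (d : ℕ) : (PowerSeries ℝ ⧸ Ideal.span {(X : PowerSeries ℝ) ^ d}) ≃ₗ[ℝ]
    (PowerSeries ℝ ⧸ (Ideal.span {(X : PowerSeries ℝ) ^ d}).restrictScalars ℝ) :=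
  (Submodule.Quotient.restrictScalarsEquiv ℝ (Ideal.span {(X : PowerSeries ℝ) ^ d})).symm

def PS.e2 (d : ℕ) : (PowerSeries ℝ ⧸ (Ideal.span {(X : PowerSeries ℝ) ^ d}).restrictScalars ℝ)
    ≃ₗ[ℝ] (PowerSeries ℝ ⧸ LinearMap.ker (PS.coeffMap d)) :=
  Submodule.quotEquivOfEq _ _ (PS.ker_coeffMap d).symm

def PS.e3 (d : ℕ) : (PowerSeries ℝ ⧸ LinearMap.ker (PS.coeffMap d)) ≃ₗ[ℝ] (Fin d → ℝ) :=
  (PS.coeffMap d).quotKerEquivOfSurjective (PS.coeffMap_surj d)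

def PS.quotSpanXPowEquiv (d : ℕ) :
    (PowerSeries ℝ ⧸ Ideal.span {(X : PowerSeries ℝ) ^ d}) ≃ₗ[ℝ] (Fin d → ℝ) :=
  ((PS.e1 d).trans (PS.e2 d)).trans (PS.e3 d)

lemma PS.span_eq_span_X_pow (f : PowerSeries ℝ) (d : ℕ) (hf : f.order = (d : ℕ∞)) :
    Ideal.span {f} = Ideal.span {(X : PowerSeries ℝ) ^ d} := by
  obtain ⟨g, hg, rfl⟩ := PS.exists_unit_factor f d hf
  rw [Ideal.span_singleton_eq_span_singleton]
  exact (Associated.symm (associated_mul_unit_left _ _ hg)).symm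

def PS.quotSpanEquiv (f : PowerSeries ℝ) (d : ℕ) (hf : f.order = (d : ℕ∞)) :
    (PowerSeries ℝ ⧸ Ideal.span {f}) ≃ₗ[ℝ] (Fin d → ℝ) :=
  (LinearEquiv.restrictScalars ℝ
      (Submodule.quotEquivOfEq (Ideal.span {f}) (Ideal.span {(X : PowerSeries ℝ) ^ d})
        (by rw [PS.span_eq_span_X_pow f d hf]))).trans
    (PS.quotSpanXPowEquiv d)

lemma PS.finrank_quot_span (f : PowerSeries ℝ) (d : ℕ) (hf : f.order = (d : ℕ∞)) :
    Module.finrank ℝ (PowerSeries ℝ ⧸ Ideal.span {f}) = d := by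
  rw [(PS.quotSpanEquiv f d hf).finrank_eq]
  simp [Module.finrank_pi]


lemma PS.mul_mem_span_iff (a b : ℕ) (y : PowerSeries ℝ) :
    (X : PowerSeries ℝ) ^ a * y ∈ Ideal.span {(X : PowerSeries ℝ) ^ (a + b)} ↔
      y ∈ Ideal.span {(X : PowerSeries ℝ) ^ b} := by
  rw [Ideal.mem_span_singleton, Ideal.mem_span_singleton, pow_add]
  exact mul_dvd_mul_iff_left (pow_ne_zero a PowerSeries.X_ne_zero)

lemma PS.aeval_add_sub_mem {n : ℕ} (x h : Fin n → PowerSeries ℝ) (p : MvPolynomial (Fin n) ℝ) :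
    aeval (x + h) p - aeval x p ∈ Ideal.span (Set.range h) := by
  induction p using MvPolynomial.induction_on with
  | C r => simp
  | add p q hp hq =>
    have : aeval (x + h) (p + q) - aeval x (p + q) =
        (aeval (x + h) p - aeval x p) + (aeval (x + h) q - aeval x q) := by
      simp only [map_add]; ring
    rw [this]; exact Ideal.add_mem _ hp hq
  | mul_X p i hp =>
    have : aeval (x + h) (p * X i) - aeval x (p * X i) =
        (aeval (x + h) p - aeval x p) * x i + aeval (x + h) p * h i := by
      simp only [map_mul, aeval_X, Pi.add_apply]; ring
    rw [this]
    exact Ideal.add_mem _ (Ideal.mul_mem_right _ _ hp)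
      (Ideal.mul_mem_left _ _ (Ideal.subset_span ⟨i, rfl⟩))

lemma PS.taylor_mem {n : ℕ} (x h : Fin n → PowerSeries ℝ) (p : MvPolynomial (Fin n) ℝ) :
    aeval (x + h) p - aeval x p - ∑ j, h j * aeval x (pderiv j p) ∈
      (Ideal.span (Set.range h)) ^ 2 := by
  induction p using MvPolynomial.induction_on with
  | C r => simp
  | add p q hp hq =>
    have : aeval (x + h) (p + q) - aeval x (p + q) - ∑ j, h j * aeval x (pderiv j (p + q)) =
        (aeval (x + h) p - aeval x p - ∑ j, h j * aeval x (pderiv j p)) +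
        (aeval (x + h) q - aeval x q - ∑ j, h j * aeval x (pderiv j q)) := by
      simp only [map_add, mul_add, Finset.sum_add_distrib]; ring
    rw [this]; exact Ideal.add_mem _ hp hq
  | mul_X p i hp =>
    have key : ∀ j, aeval x (pderiv j (p * X i)) =
        aeval x (pderiv j p) * x i + (if j = i then aeval x p else 0) := by
      intro j
      by_cases hji : j = i
      · subst hji
        simp only [pderiv_mul, pderiv_X_self, map_add, map_mul, aeval_X, mul_one,
          eq_self_iff_true, if_true]
      · simp only [pderiv_mul, pderiv_X_of_ne (Ne.symm hji), map_add, map_mul, aeval_X,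
          mul_zero, add_zero, if_neg hji]
    have expand : aeval (x + h) (p * X i) - aeval x (p * X i) -
        ∑ j, h j * aeval x (pderiv j (p * X i)) =
        x i * (aeval (x + h) p - aeval x p - ∑ j, h j * aeval x (pderiv j p)) +
        h i * (aeval (x + h) p - aeval x p) := by
      simp only [map_mul, aeval_X, Pi.add_apply]
      rw [Finset.sum_congr rfl (fun j _ => by rw [key j])]
      simp only [mul_add, Finset.sum_add_distrib, mul_ite, mul_zero, Finset.sum_ite_eq',
        Finset.mem_univ, if_true, ← mul_assoc]
      rw [← Finset.sum_mul]
      ring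
    rw [expand]
    refine Ideal.add_mem _ (Ideal.mul_mem_left _ _ hp) ?_
    rw [sq]
    exact Ideal.mul_mem_mul (Ideal.subset_span ⟨i, rfl⟩) (PS.aeval_add_sub_mem x h p)



lemma PS.order_prod {ι : Type*} (s : Finset ι) (f : ι → PowerSeries ℝ) :
    (∏ i ∈ s, f i).order = ∑ i ∈ s, (f i).order := by
  classical
  induction s using Finset.cons_induction with
  | empty => simp [PowerSeries.order_one]
  | cons a s ha ih =>
    rw [Finset.prod_cons, Finset.sum_cons, PowerSeries.order_mul, ih]

lemma PS.finrank_quot_range (n : ℕ) (J : Matrix (Fin n) (Fin n) (PowerSeries ℝ)) (e : ℕ)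
    (hdet : J.det ≠ 0) (hord : J.det.order = (e : ℕ∞)) :
    Module.finrank ℝ ((Fin n → PowerSeries ℝ) ⧸ LinearMap.range J.mulVecLin) = e := by
  classical
  have hinj : Function.Injective J.mulVecLin := by
    rw [← LinearMap.ker_eq_bot]
    rw [Matrix.ker_mulVecLin_eq_bot_iff]
    intro v hv
    have hsm : J.det • v = 0 := by
      calc J.det • v = (J.det • (1 : Matrix (Fin n) (Fin n) (PowerSeries ℝ))).mulVec v := by
              rw [Matrix.smul_mulVec, Matrix.one_mulVec]
        _ = (J.adjugate * J).mulVec v := by rw [Matrix.adjugate_mul]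
        _ = J.adjugate.mulVec (J.mulVec v) := by rw [Matrix.mulVec_mulVec]
        _ = 0 := by rw [hv, Matrix.mulVec_zero]
    funext i
    have := congrFun hsm i
    simp only [Pi.smul_apply, smul_eq_mul, Pi.zero_apply] at this
    exact (mul_eq_zero.mp this).resolve_left hdet
  set N := LinearMap.range J.mulVecLin with hNdef
  obtain ⟨m, snf⟩ := Submodule.smithNormalForm (Pi.basisFun RR (Fin n)) N
  have hmn : m = n := by
    have bN2 : Module.Basis (Fin n) RR N :=
      (Pi.basisFun RR (Fin n)).map (LinearEquiv.ofInjective _ hinj)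
    simpa using Fintype.card_congr (Module.Basis.indexEquiv snf.bN bN2)
  subst hmn
  set g : Fin m ≃ Fin m :=
    Equiv.ofBijective snf.f (Finite.injective_iff_bijective.mp snf.f.injective) with hg
  set α : Fin m → RR := fun j => snf.a (g.symm j) with hα
  set bM := snf.bM with hbM
  set bN' := snf.bN.reindex g with hbN'
  have hfg : ∀ x, snf.f x = g x := fun x => rfl
  have hbval : ∀ j, (bN' j : Fin m → RR) = α j • bM j := by
    intro j
    rw [hbN', Module.Basis.reindex_apply, snf.snf, hfg, g.apply_symm_apply]
  have mem_N_iff : ∀ x : Fin m → RR, x ∈ N ↔ ∀ j, α j ∣ bM.repr x j := by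
    intro x
    rw [bN'.mem_submodule_iff']
    have hrepr : ∀ (c : Fin m → RR) (j), bM.repr (∑ i, c i • (α i • bM i)) j = α j * c j := by
      intro c j
      simp only [← mul_smul]
      rw [bM.repr_sum_self]
      exact mul_comm _ _
    constructor
    · rintro ⟨c, rfl⟩ j
      refine ⟨c j, ?_⟩
      rw [Finset.sum_congr rfl (fun i _ => by rw [hbval i]), hrepr]
    · intro hdvd
      choose c hc using hdvd
      refine ⟨c, bM.ext_elem fun j => ?_⟩
      rw [Finset.sum_congr rfl (fun i _ => by rw [hbval i]), hrepr]
      exact (hc j).symm ▸ (hc j)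
  have hmap : Submodule.map (bM.equivFun : (Fin m → RR) →ₗ[RR] (Fin m → RR)) N =
      Submodule.pi Set.univ (fun j => (Ideal.span {α j} : Ideal RR)) := by
    ext x
    simp only [Submodule.mem_map, Submodule.mem_pi, Ideal.mem_span_singleton, Set.mem_univ,
      forall_true_left, LinearEquiv.coe_coe, Module.Basis.equivFun_apply, mem_N_iff]
    constructor
    · rintro ⟨y, hy, rfl⟩ j
      exact hy j
    · intro hdvd
      refine ⟨∑ i, x i • bM i, fun j => ?_, ?_⟩ <;>
        simp only [bM.repr_sum_self]
      · exact hdvd j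
  have E1 : ((Fin m → RR) ⧸ N) ≃ₗ[RR]
      ((Fin m → RR) ⧸ Submodule.pi Set.univ (fun j => (Ideal.span {α j} : Ideal RR))) :=
    Submodule.Quotient.equiv N _ bM.equivFun hmap
  have E2 := Submodule.quotientPi (fun j => (Ideal.span {α j} : Ideal RR))
  have E : ((Fin m → RR) ⧸ N) ≃ₗ[ℝ] ∀ j, RR ⧸ (Ideal.span {α j} : Ideal RR) :=
    LinearEquiv.restrictScalars ℝ (E1.trans E2)
  -- determinant comparison
  have hφdet : LinearMap.det (J.mulVecLin) = J.det := by
    rw [← Matrix.toLin'_apply']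
    exact LinearMap.det_toLin' J
  let eN : (Fin m → RR) ≃ₗ[RR] N := LinearEquiv.ofInjective _ hinj
  let cB : Module.Basis (Fin m) RR (Fin m → RR) := bN'.map eN.symm
  have hφc : ∀ j, J.mulVecLin (cB j) = α j • bM j := by
    intro j
    have h1 : J.mulVecLin (eN.symm (bN' j)) = ((eN (eN.symm (bN' j)) : N) : Fin m → RR) :=
      (LinearEquiv.ofInjective_apply _ _).symm
    rw [show cB j = eN.symm (bN' j) from Module.Basis.map_apply _ _ _, h1, eN.apply_symm_apply, hbval]
  have hmat : LinearMap.toMatrix cB bM J.mulVecLin = Matrix.diagonal α := by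
    ext i j
    rw [LinearMap.toMatrix_apply, hφc j, map_smul]
    by_cases h : i = j
    · subst h
      simp [Module.Basis.repr_self]
    · simp [Module.Basis.repr_self, Finsupp.single_apply, Matrix.diagonal_apply_ne _ (Ne.symm h),
        Ne.symm h, h]
  have hsplit : LinearMap.toMatrix bM bM J.mulVecLin =
      (LinearMap.toMatrix cB bM J.mulVecLin) * (LinearMap.toMatrix bM cB LinearMap.id) := by
    rw [← LinearMap.toMatrix_comp bM cB bM, LinearMap.comp_id]
  have hPunit : IsUnit (LinearMap.toMatrix bM cB LinearMap.id).det := by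
    apply IsUnit.of_mul_eq_one (LinearMap.toMatrix cB bM LinearMap.id).det
    rw [← Matrix.det_mul, ← LinearMap.toMatrix_comp cB bM cB, LinearMap.comp_id,
      LinearMap.toMatrix_id, Matrix.det_one]
  have hdet2 : J.det = (∏ j, α j) * (LinearMap.toMatrix bM cB LinearMap.id).det := by
    rw [← hφdet, ← LinearMap.det_toMatrix bM, hsplit, Matrix.det_mul, hmat, Matrix.det_diagonal]
  have hαne : ∀ j, α j ≠ 0 := by
    intro j hj
    apply hdet
    rw [hdet2, Finset.prod_eq_zero (Finset.mem_univ j) hj, zero_mul]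
  have hordsum : ∑ j, (α j).order = (e : ℕ∞) := by
    rw [← hord, hdet2, PowerSeries.order_mul, PowerSeries.order_zero_of_unit hPunit, add_zero,
      PS.order_prod]
  have hdj : ∀ j, (α j).order = (((α j).order.toNat : ℕ) : ℕ∞) := by
    intro j
    rw [ENat.coe_toNat]
    rw [ne_eq, PowerSeries.order_eq_top]
    exact hαne j
  haveI : ∀ j, Module.Finite ℝ (RR ⧸ (Ideal.span {α j} : Ideal RR)) := by
    intro j
    exact Module.Finite.equiv (PS.quotSpanEquiv (α j) _ (hdj j)).symm
  rw [E.finrank_eq, Module.finrank_pi_fintype]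
  have hfr : ∀ j, Module.finrank ℝ (RR ⧸ (Ideal.span {α j} : Ideal RR)) = (α j).order.toNat := by
    intro j
    rw [(PS.quotSpanEquiv (α j) _ (hdj j)).finrank_eq]
    simp [Module.finrank_pi]
  rw [Finset.sum_congr rfl (fun j _ => hfr j)]
  have : ((∑ j, (α j).order.toNat : ℕ) : ℕ∞) = ((e : ℕ) : ℕ∞) := by
    rw [Nat.cast_sum, ← hordsum]
    exact Finset.sum_congr rfl (fun j _ => (hdj j).symm)
  exact_mod_cast this


-- cancellation helper
lemma PS.smul_cancel {n : ℕ} (a : PowerSeries ℝ) (ha : a ≠ 0) {v w : Fin n → PowerSeries ℝ}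
    (h : a • v = a • w) : v = w := by
  funext i
  have := congrFun h i
  simp only [Pi.smul_apply, smul_eq_mul] at this
  exact mul_left_cancel₀ ha this

lemma PS.adj_range {n : ℕ} (J : Matrix (Fin n) (Fin n) (PowerSeries ℝ)) (e : ℕ)
    (g₀ : PowerSeries ℝ) (hg : IsUnit g₀) (hJ : J.det = (X : PowerSeries ℝ) ^ e * g₀)
    (u : Fin n → PowerSeries ℝ)
    (h : ∀ i, (J.mulVec u) i ∈ Ideal.span {(X : PowerSeries ℝ) ^ e}) :
    ∃ z, u = J.adjugate.mulVec z := by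
  obtain ⟨gu, rfl⟩ := hg
  have hv : ∀ i, ∃ v, (J.mulVec u) i = (X : PowerSeries ℝ) ^ e * v := by
    intro i; exact Ideal.mem_span_singleton.mp (h i)
  choose v hv using hv
  have h1 : J.adjugate.mulVec (J.mulVec u) = ((X : PowerSeries ℝ) ^ e) • ((gu : PowerSeries ℝ) • u) := by
    rw [Matrix.mulVec_mulVec, Matrix.adjugate_mul, hJ, Matrix.smul_mulVec,
      Matrix.one_mulVec, mul_smul]
  have h2 : J.mulVec u = ((X : PowerSeries ℝ) ^ e) • v := by
    funext i; rw [hv i]; rfl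
  rw [h2, Matrix.mulVec_smul] at h1
  have h3 : (gu : PowerSeries ℝ) • u = J.adjugate.mulVec v :=
    (PS.smul_cancel _ (pow_ne_zero e PowerSeries.X_ne_zero) h1).symm
  refine ⟨((gu⁻¹ : (PowerSeries ℝ)ˣ) : PowerSeries ℝ) • v, ?_⟩
  rw [Matrix.mulVec_smul, ← h3, smul_smul, Units.inv_mul, one_smul]

lemma PS.adj_mem_iff {n : ℕ} (J : Matrix (Fin n) (Fin n) (PowerSeries ℝ)) (e : ℕ)
    (g₀ : PowerSeries ℝ) (hg : IsUnit g₀) (hJ : J.det = (X : PowerSeries ℝ) ^ e * g₀)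
    (z : Fin n → PowerSeries ℝ) :
    (∀ i, (J.adjugate.mulVec z) i ∈ Ideal.span {(X : PowerSeries ℝ) ^ e}) ↔
      z ∈ LinearMap.range J.mulVecLin := by
  constructor
  · intro h
    obtain ⟨gu, rfl⟩ := hg
    have hv : ∀ i, ∃ v, (J.adjugate.mulVec z) i = (X : PowerSeries ℝ) ^ e * v := by
      intro i; exact Ideal.mem_span_singleton.mp (h i)
    choose v hv using hv
    have h1 : J.mulVec (J.adjugate.mulVec z) =
        ((X : PowerSeries ℝ) ^ e) • ((gu : PowerSeries ℝ) • z) := by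
      rw [Matrix.mulVec_mulVec, Matrix.mul_adjugate, hJ, Matrix.smul_mulVec,
        Matrix.one_mulVec, mul_smul]
    have h2 : J.adjugate.mulVec z = ((X : PowerSeries ℝ) ^ e) • v := by
      funext i; rw [hv i]; rfl
    rw [h2, Matrix.mulVec_smul] at h1
    have h3 : (gu : PowerSeries ℝ) • z = J.mulVec v :=
      (PS.smul_cancel _ (pow_ne_zero e PowerSeries.X_ne_zero) h1).symm
    refine ⟨((gu⁻¹ : (PowerSeries ℝ)ˣ) : PowerSeries ℝ) • v, ?_⟩
    show J.mulVec _ = z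
    rw [Matrix.mulVec_smul, ← h3, smul_smul, Units.inv_mul, one_smul]
  · rintro ⟨y, rfl⟩
    intro i
    show (J.adjugate.mulVec (J.mulVec y)) i ∈ _
    rw [Matrix.mulVec_mulVec, Matrix.adjugate_mul, Matrix.smul_mulVec, Matrix.one_mulVec]
    rw [Ideal.mem_span_singleton, hJ]
    simp only [Pi.smul_apply, smul_eq_mul]
    exact Dvd.dvd.mul_right (dvd_mul_right _ _) _

end JetFiberAux

set_option maxHeartbeats 1000000

set_option synthInstance.maxHeartbeats 1000000 in
/-- **Fibers of the jet map are affine spaces of dimension `e`** (Lemma 5.3 of the paper).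
Let `σ : ℝⁿ → ℝⁿ` be a polynomial map, `γ ∈ ℝ⟦t⟧ⁿ` a tuple of power series of order `≥ 1`
whose Jacobian determinant along `γ` is nonzero of order `e`, and `k ≥ 2e`. Then in the
jet space `J_k = (ℝ[t]/(t^{k+1}))ⁿ`, the set of reductions of tuples `δ` with
`δ ≡ γ mod t^{k−e+1}` and `σ(δ) ≡ σ(γ) mod t^{k+1}` is an affine subspace `γ̄ + W` with
`dim_ℝ W = e`. -/
theorem jet_fiber_affine_of_dim_e
    {n : ℕ} (σ : Fin n → MvPolynomial (Fin n) ℝ)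
    (γ : Fin n → PowerSeries ℝ) (hγ : ∀ i, 1 ≤ (γ i).order)
    (e : ℕ)
    (hdet : (Matrix.of fun i j : Fin n =>
        MvPolynomial.aeval γ (MvPolynomial.pderiv j (σ i))).det ≠ 0)
    (hord : ((Matrix.of fun i j : Fin n =>
        MvPolynomial.aeval γ (MvPolynomial.pderiv j (σ i))).det).order = (e : ℕ∞))
    (k : ℕ) (hk : 2 * e ≤ k) :
    ∃ W : Submodule ℝ
        (Fin n → PowerSeries ℝ ⧸ Ideal.span {(PowerSeries.X : PowerSeries ℝ) ^ (k + 1)}),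
      Module.finrank ℝ W = e ∧
      ((fun δ : Fin n → PowerSeries ℝ => fun i =>
          Ideal.Quotient.mk
            (Ideal.span {(PowerSeries.X : PowerSeries ℝ) ^ (k + 1)}) (δ i)) ''
        {δ : Fin n → PowerSeries ℝ |
          (∀ i, δ i - γ i ∈
            Ideal.span {(PowerSeries.X : PowerSeries ℝ) ^ (k - e + 1)}) ∧
          (∀ i, MvPolynomial.aeval δ (σ i) - MvPolynomial.aeval γ (σ i) ∈
            Ideal.span {(PowerSeries.X : PowerSeries ℝ) ^ (k + 1)})}) =
      (fun w => (fun i =>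
          Ideal.Quotient.mk
            (Ideal.span {(PowerSeries.X : PowerSeries ℝ) ^ (k + 1)}) (γ i)) + w) ''
        (W : Set (Fin n → PowerSeries ℝ ⧸
          Ideal.span {(PowerSeries.X : PowerSeries ℝ) ^ (k + 1)})) := by
  classical
  set J : Matrix (Fin n) (Fin n) (PowerSeries ℝ) :=
    Matrix.of fun i j : Fin n => MvPolynomial.aeval γ (MvPolynomial.pderiv j (σ i)) with hJdef
  set c : ℕ := k - e + 1 with hcdef
  have hek : e ≤ k := le_trans (by omega) hk
  have hck : c + e = k + 1 := by omega
  set I : Ideal (PowerSeries ℝ) := Ideal.span {(X : PowerSeries ℝ) ^ (k + 1)} with hIdef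
  obtain ⟨g₀, hg₀, hJfac⟩ := PS.exists_unit_factor J.det e hord
  -- the quotient map, componentwise, as an ℝ-linear map
  let q : PowerSeries ℝ →ₗ[ℝ] (PowerSeries ℝ ⧸ I) := (Ideal.Quotient.mkₐ ℝ I).toLinearMap
  let π : (Fin n → PowerSeries ℝ) →ₗ[ℝ] (Fin n → PowerSeries ℝ ⧸ I) :=
    LinearMap.pi fun i => q.comp (LinearMap.proj i)
  let A : (Fin n → PowerSeries ℝ) →ₗ[ℝ] (Fin n → PowerSeries ℝ) :=
    (((X : PowerSeries ℝ) ^ c) • J.adjugate.mulVecLin).restrictScalars ℝ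
  let ξ : (Fin n → PowerSeries ℝ) →ₗ[ℝ] (Fin n → PowerSeries ℝ ⧸ I) := π.comp A
  have hξ : ∀ z i, ξ z i = Ideal.Quotient.mk I ((X : PowerSeries ℝ) ^ c * (J.adjugate.mulVec z) i) := by
    intro z i
    simp [ξ, π, A, q, Matrix.mulVecLin_apply, Ideal.Quotient.mkₐ_eq_mk]
  refine ⟨LinearMap.range ξ, ?_, ?_⟩
  · -- dimension
    have hker : LinearMap.ker ξ = (LinearMap.range J.mulVecLin).restrictScalars ℝ := by
      ext z
      simp only [LinearMap.mem_ker, Submodule.restrictScalars_mem]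
      rw [funext_iff]
      have hiff : ∀ i, (ξ z i = 0) ↔
          ((J.adjugate.mulVec z) i ∈ Ideal.span {(X : PowerSeries ℝ) ^ e}) := by
        intro i
        rw [hξ, Ideal.Quotient.eq_zero_iff_mem, hIdef, ← hck]
        exact PS.mul_mem_span_iff c e _
      rw [show (∀ i, ξ z i = (0 : Fin n → PowerSeries ℝ ⧸ I) i) ↔
          (∀ i, ξ z i = 0) from Iff.rfl, forall_congr' hiff]
      exact PS.adj_mem_iff J e g₀ hg₀ hJfac z
    have E1 := ξ.quotKerEquivRange
    rw [← E1.finrank_eq, hker]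
    rw [(Submodule.Quotient.restrictScalarsEquiv ℝ (LinearMap.range J.mulVecLin)).finrank_eq]
    exact PS.finrank_quot_range n J e hdet hord
  · -- set equality
    have key : ∀ h : Fin n → PowerSeries ℝ, (∀ i, h i ∈ Ideal.span {(X : PowerSeries ℝ) ^ c}) →
        ∀ i, aeval (γ + h) (σ i) - aeval γ (σ i) - ∑ j, h j * (J i j) ∈ I := by
      intro h hh i
      have hT := PS.taylor_mem γ h (σ i)
      have hle : (Ideal.span (Set.range h)) ^ 2 ≤ I := by
        have h1 : Ideal.span (Set.range h) ≤ Ideal.span {(X : PowerSeries ℝ) ^ c} := by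
          rw [Ideal.span_le]
          rintro - ⟨i, rfl⟩
          exact hh i
        refine le_trans (Ideal.pow_right_mono h1 2) ?_
        rw [Ideal.span_singleton_pow, hIdef]
        rw [Ideal.span_singleton_le_span_singleton, ← pow_mul]
        exact pow_dvd_pow _ (by omega)
      exact hle hT
    ext w
    constructor
    · rintro ⟨δ, ⟨hδ1, hδ2⟩, rfl⟩
      set h : Fin n → PowerSeries ℝ := fun i => δ i - γ i with hhdef
      have hγh : γ + h = δ := by funext i; simp [h]
      have hu : ∀ i, ∃ u, h i = (X : PowerSeries ℝ) ^ c * u :=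
        fun i => Ideal.mem_span_singleton.mp (hδ1 i)
      choose u hu using hu
      have hJu : ∀ i, (J.mulVec u) i ∈ Ideal.span {(X : PowerSeries ℝ) ^ e} := by
        intro i
        have h1 : ∑ j, h j * (J i j) ∈ I := by
          have h2 := key h (fun i => (hu i) ▸ Ideal.mem_span_singleton.mpr ⟨u i, rfl⟩) i
          rw [hγh] at h2
          have h3 := hδ2 i
          have := Ideal.sub_mem I h3 h2
          simpa using this
        have h4 : ∑ j, h j * (J i j) = (X : PowerSeries ℝ) ^ c * (J.mulVec u) i := by
          rw [Matrix.mulVec, dotProduct, Finset.mul_sum]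
          refine Finset.sum_congr rfl (fun j _ => ?_)
          rw [hu j]; ring
        rw [h4, hIdef, ← hck] at h1
        exact (PS.mul_mem_span_iff c e _).mp h1
      obtain ⟨z, hz⟩ := PS.adj_range J e g₀ hg₀ hJfac u hJu
      refine ⟨ξ z, ⟨z, rfl⟩, ?_⟩
      funext i
      show Ideal.Quotient.mk I (γ i) + ξ z i = Ideal.Quotient.mk I (δ i)
      rw [hξ, ← hz, ← map_add, ← hu i]
      congr 1
      simp [h]
    · rintro ⟨w', ⟨z, rfl⟩, rfl⟩
      set h : Fin n → PowerSeries ℝ := fun i => (X : PowerSeries ℝ) ^ c * (J.adjugate.mulVec z) i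
        with hhdef
      have hh : ∀ i, h i ∈ Ideal.span {(X : PowerSeries ℝ) ^ c} :=
        fun i => Ideal.mem_span_singleton.mpr ⟨_, rfl⟩
      refine ⟨γ + h, ⟨fun i => by simpa [h] using hh i, fun i => ?_⟩, ?_⟩
      · have h2 := key h hh i
        have h4 : ∑ j, h j * (J i j) ∈ I := by
          have h5 : ∑ j, h j * (J i j) = (X : PowerSeries ℝ) ^ c * (J.mulVec (J.adjugate.mulVec z)) i := by
            rw [Matrix.mulVec, dotProduct, Finset.mul_sum]
            refine Finset.sum_congr rfl (fun j _ => ?_)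
            simp only [hhdef]; ring
          rw [h5, Matrix.mulVec_mulVec, Matrix.mul_adjugate, Matrix.smul_mulVec,
            Matrix.one_mulVec, hIdef]
          rw [Ideal.mem_span_singleton]
          simp only [Pi.smul_apply, smul_eq_mul, hJfac]
          rw [show (X : PowerSeries ℝ) ^ (k + 1) = (X : PowerSeries ℝ) ^ c * (X : PowerSeries ℝ) ^ e by
            rw [← pow_add, hck]]
          exact mul_dvd_mul_left _ (Dvd.dvd.mul_right (dvd_mul_right _ _) _)
        have := Ideal.add_mem I h4 h2
        simpa using this
      · funext i
        show Ideal.Quotient.mk I (γ i + h i) = Ideal.Quotient.mk I (γ i) + ξ z i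
        rw [hξ, ← map_add]
end
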